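/- Let C > 0, set γ := √(C/2), let s ≥ 0 and let H : [0, s] → ℝ be differentiable with H(0) ≥ 0 and H'(τ) ≤ −H(τ)²/2 + C for all τ ∈ [0, s]. Then H(s) ≤ (√(2C)·sinh(γ s) + cosh(γ s)·H(0)) / (cosh(γ s) + (√(2C))^{−1}·sinh(γ s)·H(0)). -/

import Mathlib

open Set

/-- **Riccati comparison with a curvature term** (from the proof of Lemma 6.7): if `H` is
differentiable on `[0, s]` with `H(0) ≥ 0` and `H' ≤ −H²/2 + C`, then with `γ = √(C/2)`,
`H(s) ≤ (√(2C) sinh(γs) + cosh(γs) H(0)) / (cosh(γs) + (√(2C))⁻¹ sinh(γs) H(0))`. -/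
theorem riccati_comparison_curvature (C : ℝ) (hC : 0 < C) (s : ℝ) (hs : 0 ≤ s)
    (H H' : ℝ → ℝ)
    (hderiv : ∀ τ ∈ Icc (0 : ℝ) s, HasDerivWithinAt H (H' τ) (Icc (0 : ℝ) s) τ)
    (h0 : 0 ≤ H 0)
    (hineq : ∀ τ ∈ Icc (0 : ℝ) s, H' τ ≤ -(H τ) ^ 2 / 2 + C) :
    H s ≤ (Real.sqrt (2 * C) * Real.sinh (Real.sqrt (C / 2) * s)
            + Real.cosh (Real.sqrt (C / 2) * s) * H 0) /
          (Real.cosh (Real.sqrt (C / 2) * s)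
            + (Real.sqrt (2 * C))⁻¹ * Real.sinh (Real.sqrt (C / 2) * s) * H 0) := by
  set γ := Real.sqrt (C / 2) with hγdef
  set k := Real.sqrt (2 * C) with hkdef
  have hγpos : 0 < γ := Real.sqrt_pos.2 (by linarith)
  have hkpos : 0 < k := Real.sqrt_pos.2 (by linarith)
  have hγ2 : γ ^ 2 = C / 2 := Real.sq_sqrt (by linarith)
  have hk2 : k ^ 2 = 2 * C := Real.sq_sqrt (by linarith)
  have hk2γ : k = 2 * γ := by
    nlinarith [hγpos, hkpos]
  set H0 := H 0 with hH0
  -- the explicit comparison solution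
  set N : ℝ → ℝ := fun τ => k * Real.sinh (γ * τ) + Real.cosh (γ * τ) * H0 with hN
  set D : ℝ → ℝ := fun τ => Real.cosh (γ * τ) + k⁻¹ * Real.sinh (γ * τ) * H0 with hD
  set y : ℝ → ℝ := fun τ => N τ / D τ with hy
  have hDpos : ∀ τ, 0 ≤ τ → 0 < D τ := by
    intro τ hτ
    have h1 : 0 ≤ Real.sinh (γ * τ) := Real.sinh_nonneg_iff.2 (by positivity)
    have h2 : 0 < Real.cosh (γ * τ) := Real.cosh_pos _
    have : 0 ≤ k⁻¹ * Real.sinh (γ * τ) * H0 := by positivity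
    simp only [hD]; linarith
  have hNnonneg : ∀ τ, 0 ≤ τ → 0 ≤ N τ := by
    intro τ hτ
    have h1 : 0 ≤ Real.sinh (γ * τ) := Real.sinh_nonneg_iff.2 (by positivity)
    have h2 : 0 < Real.cosh (γ * τ) := Real.cosh_pos _
    simp only [hN]; positivity
  have hynonneg : ∀ τ, 0 ≤ τ → 0 ≤ y τ :=
    fun τ hτ => div_nonneg (hNnonneg τ hτ) (hDpos τ hτ).le
  have hy0 : y 0 = H0 := by
    simp [hy, hN, hD]
  -- derivatives of N, D, y
  have hsinh' : ∀ τ : ℝ, HasDerivAt (fun t => Real.sinh (γ * t)) (γ * Real.cosh (γ * τ)) τ := by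
    intro τ
    simpa [Function.comp_def, mul_comm] using
      (Real.hasDerivAt_sinh (γ * τ)).comp τ ((hasDerivAt_id τ).const_mul γ)
  have hcosh' : ∀ τ : ℝ, HasDerivAt (fun t => Real.cosh (γ * t)) (γ * Real.sinh (γ * τ)) τ := by
    intro τ
    simpa [Function.comp_def, mul_comm] using
      (Real.hasDerivAt_cosh (γ * τ)).comp τ ((hasDerivAt_id τ).const_mul γ)
  have hN' : ∀ τ : ℝ, HasDerivAt N
      (k * (γ * Real.cosh (γ * τ)) + γ * Real.sinh (γ * τ) * H0) τ := by
    intro τ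
    exact ((hsinh' τ).const_mul k).add ((hcosh' τ).mul_const H0)
  have hD' : ∀ τ : ℝ, HasDerivAt D
      (γ * Real.sinh (γ * τ) + k⁻¹ * (γ * Real.cosh (γ * τ)) * H0) τ := by
    intro τ
    exact (hcosh' τ).add (((hsinh' τ).const_mul k⁻¹).mul_const H0)
  have hy' : ∀ τ, 0 ≤ τ → HasDerivAt y (-(y τ) ^ 2 / 2 + C) τ := by
    intro τ hτ
    have hDτ : D τ ≠ 0 := (hDpos τ hτ).ne'
    have h := (hN' τ).div (hD' τ) hDτ
    convert h using 1
    any_goals rfl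
    set c := Real.cosh (γ * τ) with hc
    set sh := Real.sinh (γ * τ) with hsh
    have hpyth : c ^ 2 - sh ^ 2 = 1 := Real.cosh_sq_sub_sinh_sq _
    have hDτ' : c + k⁻¹ * sh * H0 ≠ 0 := hDτ
    simp only [hy, hN, hD, ← hc, ← hsh]
    have hC2 : C = 2 * γ ^ 2 := by nlinarith
    rw [hk2γ] at hDτ' ⊢
    rw [hC2]
    field_simp
    have hB : 2 * γ * c + sh * H0 ≠ 0 := by
      have hγ0 : γ ≠ 0 := hγpos.ne'
      have he : 2 * γ * c + sh * H0 = 2 * γ * (c + (2 * γ)⁻¹ * sh * H0) := by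
        field_simp
      rw [he]; exact mul_ne_zero (by positivity) hDτ'
    rw [sub_div, div_self (pow_ne_zero 2 hB)]; ring
  -- comparison argument
  have hHcont : ContinuousOn H (Icc 0 s) := fun τ hτ => (hderiv τ hτ).continuousWithinAt
  have hNcont : Continuous N := by
    rw [continuous_iff_continuousAt]; exact fun τ => (hN' τ).continuousAt
  have hDcont : Continuous D := by
    rw [continuous_iff_continuousAt]; exact fun τ => (hD' τ).continuousAt
  have hycont : ContinuousOn y (Icc 0 s) :=
    ContinuousOn.div hNcont.continuousOn hDcont.continuousOn
      (fun τ hτ => (hDpos τ hτ.1).ne')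
  set g : ℝ → ℝ := fun τ => H τ - y τ with hg
  have hgcont : ContinuousOn g (Icc 0 s) := hHcont.sub hycont
  have hg0 : g 0 = 0 := by simp [hg, hy0, hH0]
  suffices hgs : g s ≤ 0 by
    have := hynonneg s hs
    simp only [hg, sub_nonpos] at hgs
    exact hgs.trans_eq rfl
  set S : Set ℝ := {τ ∈ Icc (0:ℝ) s | g τ ≤ 0} with hS
  have hSne : S.Nonempty := ⟨0, ⟨le_refl 0, hs⟩, hg0.le⟩
  have hSbdd : BddAbove S := ⟨s, fun τ hτ => hτ.1.2⟩
  have hSclosed : IsClosed S := by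
    have : S = Icc (0:ℝ) s ∩ g ⁻¹' (Iic 0) := by ext τ; exact Iff.rfl
    rw [this]
    exact hgcont.preimage_isClosed_of_isClosed isClosed_Icc isClosed_Iic
  set T := sSup S with hT
  have hTS : T ∈ S := hSclosed.csSup_mem hSne hSbdd
  have hTmem : T ∈ Icc (0:ℝ) s := hTS.1
  have hgT : g T ≤ 0 := hTS.2
  rcases eq_or_lt_of_le hTmem.2 with hTs | hTs
  · rwa [hTs] at hgT
  -- T < s; on (T, s], g > 0
  have hgpos : ∀ τ, T < τ → τ ≤ s → 0 < g τ := by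
    intro τ h1 h2
    by_contra hle
    push_neg at hle
    have : τ ∈ S := ⟨⟨hTmem.1.trans h1.le, h2⟩, hle⟩
    exact absurd (le_csSup hSbdd this) (not_le.2 h1)
  -- g is antitone on [T, s]
  have hanti : AntitoneOn g (Icc T s) := by
    have hsub : Icc T s ⊆ Icc 0 s := Icc_subset_Icc hTmem.1 le_rfl
    have hderivg : ∀ τ ∈ Ioo T s, HasDerivAt g (H' τ - (-(y τ) ^ 2 / 2 + C)) τ := by
      intro τ hτ
      have hτ0 : 0 < τ := lt_of_le_of_lt hTmem.1 hτ.1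
      have hτIcc : τ ∈ Icc (0:ℝ) s := ⟨hτ0.le, hτ.2.le⟩
      have hnhds : Icc (0:ℝ) s ∈ nhds τ :=
        Icc_mem_nhds hτ0 hτ.2
      exact ((hderiv τ hτIcc).hasDerivAt hnhds).sub (hy' τ hτ0.le)
    apply antitoneOn_of_deriv_nonpos (convex_Icc T s) (hgcont.mono hsub)
    · intro τ hτ
      rw [interior_Icc] at hτ
      exact ((hderivg τ hτ).differentiableAt).differentiableWithinAt
    · intro τ hτ
      rw [interior_Icc] at hτ
      have hτ0 : 0 < τ := lt_of_le_of_lt hTmem.1 hτ.1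
      rw [(hderivg τ hτ).deriv]
      have h1 : H' τ ≤ -(H τ) ^ 2 / 2 + C := hineq τ ⟨hτ0.le, hτ.2.le⟩
      have h2 : 0 < g τ := hgpos τ hτ.1 hτ.2.le
      have h3 : 0 ≤ y τ := hynonneg τ hτ0.le
      have h4 : y τ < H τ := by simp only [hg, sub_pos] at h2; exact h2
      nlinarith
  have := hanti ⟨le_rfl, hTmem.2⟩ ⟨hTmem.2, le_rfl⟩ hTmem.2
  linarith
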